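/- Let n ∈ ℕ, let I be a finite nonempty index set, and for each i ∈ I let C_i ⊆ ℝ^n be a nonempty compact convex set. Define H₀ = {(x, (v_i)_{i∈I}, (λ_i)_{i∈I}) ∈ ℝ^n × (ℝ^n)^I × ℝ^I : x = Σ_{i∈I} v_i, Σ_{i∈I} λ_i = 1, λ_i ≥ 0 for all i ∈ I, and for each i ∈ I, either λ_i > 0 and v_i/λ_i ∈ C_i, or λ_i = 0 and v_i = 0}. Then the projection of H₀ onto the x coordinates equals the closure of the convex hull of the union: proj_x(H₀) = cl conv(⋃_{i∈I} C_i). -/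

import Mathlib

/-- For nonempty compact convex sets `C i`, the projection onto
`x` of the extended set `H₀` (with the exact perspective conditions) equals the
closure of the convex hull of the union of the `C i`. -/
theorem proj_perspective_hull_eq_closure_convexHull_union
    {n : ℕ} {I : Type*} [Fintype I] [Nonempty I]
    (C : I → Set (Fin n → ℝ))
    (hCne : ∀ i, (C i).Nonempty)
    (hCcompact : ∀ i, IsCompact (C i))
    (hCconvex : ∀ i, Convex ℝ (C i)) :
    {x : Fin n → ℝ | ∃ (v : I → (Fin n → ℝ)) (lam : I → ℝ),
        x = ∑ i : I, v i ∧
        ∑ i : I, lam i = 1 ∧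
        (∀ i : I, 0 ≤ lam i) ∧
        (∀ i : I, (0 < lam i ∧ (lam i)⁻¹ • v i ∈ C i) ∨ (lam i = 0 ∧ v i = 0))} =
      closure (convexHull ℝ (⋃ i : I, C i)) := by
  classical
  set S : Set (Fin n → ℝ) := {x : Fin n → ℝ | ∃ (v : I → (Fin n → ℝ)) (lam : I → ℝ),
        x = ∑ i : I, v i ∧
        ∑ i : I, lam i = 1 ∧
        (∀ i : I, 0 ≤ lam i) ∧
        (∀ i : I, (0 < lam i ∧ (lam i)⁻¹ • v i ∈ C i) ∨ (lam i = 0 ∧ v i = 0))} with hSdef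
  -- `S` is the image of a compact set under a continuous map
  set g : ((I → ℝ) × (I → Fin n → ℝ)) → (Fin n → ℝ) :=
    fun q => ∑ i : I, q.1 i • q.2 i with hg
  set D : Set ((I → ℝ) × (I → Fin n → ℝ)) :=
    stdSimplex ℝ I ×ˢ Set.univ.pi C with hD
  have hSimg : S = g '' D := by
    ext x
    constructor
    · rintro ⟨v, lam, hx, hsum, hnn, halt⟩
      refine ⟨(lam, fun i => if h : 0 < lam i then (lam i)⁻¹ • v i else (hCne i).some),
        ⟨⟨hnn, hsum⟩, ?_⟩, ?_⟩
      · intro i _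
        by_cases h : 0 < lam i
        · simp only [h, dif_pos]
          rcases halt i with ⟨_, hmem⟩ | ⟨h0, _⟩
          · exact hmem
          · exact (h.ne' h0).elim
        · simp only [h, dif_neg, not_false_iff]
          exact (hCne i).some_mem
      · rw [hx]
        apply Finset.sum_congr rfl
        intro i _
        by_cases h : 0 < lam i
        · simp only [h, dif_pos]
          rw [smul_inv_smul₀ (ne_of_gt h)]
        · rcases halt i with ⟨h', _⟩ | ⟨h0, hv0⟩
          · exact absurd h' h
          · simp [h, h0, hv0]
    · rintro ⟨⟨lam, p⟩, ⟨⟨hnn, hsum⟩, hp⟩, rfl⟩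
      refine ⟨fun i => lam i • p i, lam, rfl, hsum, hnn, fun i => ?_⟩
      by_cases h : lam i = 0
      · exact Or.inr ⟨h, by simp [h]⟩
      · refine Or.inl ⟨lt_of_le_of_ne (hnn i) (Ne.symm h), ?_⟩
        rw [inv_smul_smul₀ h]
        exact hp i (Set.mem_univ i)
  have hDcomp : IsCompact D := (isCompact_stdSimplex ℝ I).prod (isCompact_univ_pi hCcompact)
  have hgcont : Continuous g := by
    apply continuous_finset_sum
    intro i _
    exact ((continuous_apply i).comp continuous_fst).smul
      ((continuous_apply i).comp continuous_snd)
  have hSclosed : IsClosed S := by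
    rw [hSimg]
    exact (hDcomp.image hgcont).isClosed
  -- `S ⊆ convexHull`
  have hS_sub : S ⊆ convexHull ℝ (⋃ i : I, C i) := by
    rw [hSimg]
    rintro _ ⟨⟨lam, p⟩, ⟨⟨hnn, hsum⟩, hp⟩, rfl⟩
    exact Convex.sum_mem (convex_convexHull ℝ _) (fun i _ => hnn i) hsum
      (fun i _ => subset_convexHull ℝ _ (Set.mem_iUnion.2 ⟨i, hp i (Set.mem_univ i)⟩))
  -- `convexHull ⊆ S`
  have hhull_sub : convexHull ℝ (⋃ i : I, C i) ⊆ S := by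
    intro x hx
    rw [mem_convexHull_iff_exists_fintype] at hx
    obtain ⟨ι, _inst, w, z, hw0, hw1, hz, hx⟩ := hx
    have hf : ∀ j, ∃ i, z j ∈ C i := fun j => Set.mem_iUnion.1 (hz j)
    choose f hfz using hf
    refine ⟨fun i => ∑ j ∈ Finset.univ.filter (fun j => f j = i), w j • z j,
      fun i => ∑ j ∈ Finset.univ.filter (fun j => f j = i), w j, ?_, ?_, ?_, ?_⟩
    · rw [← hx]; exact (Finset.sum_fiberwise Finset.univ f (fun j => w j • z j)).symm
    · rw [show (∑ i : I, ∑ j ∈ Finset.univ.filter (fun j => f j = i), w j) = ∑ j : ι, w j from Finset.sum_fiberwise Finset.univ f w]; exact hw1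
    · intro i
      exact Finset.sum_nonneg fun j _ => hw0 j
    · intro i
      by_cases h : (∑ j ∈ Finset.univ.filter (fun j => f j = i), w j) = 0
      · refine Or.inr ⟨h, ?_⟩
        have hz0 : ∀ j ∈ Finset.univ.filter (fun j => f j = i), w j = 0 :=
          (Finset.sum_eq_zero_iff_of_nonneg fun j _ => hw0 j).1 h
        exact Finset.sum_eq_zero fun j hj => by rw [hz0 j hj, zero_smul]
      · have hpos : 0 < ∑ j ∈ Finset.univ.filter (fun j => f j = i), w j :=
          lt_of_le_of_ne (Finset.sum_nonneg fun j _ => hw0 j) (Ne.symm h)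
        refine Or.inl ⟨hpos, ?_⟩
        have : (Finset.univ.filter (fun j => f j = i)).centerMass w z ∈ C i := by
          apply (hCconvex i).centerMass_mem (fun j _ => hw0 j) hpos
          intro j hj
          have := (Finset.mem_filter.1 hj).2
          rw [← this]
          exact hfz j
        simpa [Finset.centerMass] using this
  refine le_antisymm ?_ ?_
  · exact hS_sub.trans subset_closure
  · exact closure_minimal hhull_sub hSclosed
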